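/- For all k₁, k₂ ∈ ℝ, the infimum, over all positive diagonal 3×3 matrices D, of the operator norm ‖D·K·D⁻¹‖₂ equals |k₁| + √(1 + k₁² + |k₂|). -/

import Mathlib

/-- The operator norm of a `3 × 3` real matrix acting on Euclidean `ℝ³` (largest singular value). -/
noncomputable def opNorm2 (A : Matrix (Fin 3) (Fin 3) ℝ) : ℝ :=
  ‖Matrix.toEuclideanCLM (𝕜 := ℝ) A‖

/-- The boundary coupling matrix `K`. -/
def Kmat (k₁ k₂ : ℝ) : Matrix (Fin 3) (Fin 3) ℝ :=
  !![-2 * k₁, 1, -k₂; 1, 0, 0; 1, 0, 0]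

namespace Stmt5Aux

lemma euclid_norm (x : Fin 3 → ℝ) :
    ‖(WithLp.equiv 2 (Fin 3 → ℝ)).symm x‖ = Real.sqrt ((x 0)^2 + (x 1)^2 + (x 2)^2) := by
  rw [EuclideanSpace.norm_eq]
  simp [Fin.sum_univ_three, Real.norm_eq_abs, sq_abs]

lemma opNorm2_le {A : Matrix (Fin 3) (Fin 3) ℝ} {C : ℝ} (hC : 0 ≤ C)
    (h : ∀ x : Fin 3 → ℝ,
      (A.mulVec x 0)^2 + (A.mulVec x 1)^2 + (A.mulVec x 2)^2
        ≤ C^2 * ((x 0)^2 + (x 1)^2 + (x 2)^2)) :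
    opNorm2 A ≤ C := by
  apply ContinuousLinearMap.opNorm_le_bound _ hC
  intro v
  obtain ⟨x, rfl⟩ : ∃ x : Fin 3 → ℝ, (WithLp.equiv 2 (Fin 3 → ℝ)).symm x = v :=
    ⟨WithLp.equiv 2 _ v, by simp⟩
  rw [show Matrix.toEuclideanCLM (𝕜 := ℝ) A ((WithLp.equiv 2 (Fin 3 → ℝ)).symm x) = (WithLp.equiv 2 (Fin 3 → ℝ)).symm (Matrix.toLin' A x) from rfl, Matrix.toLin'_apply, euclid_norm, euclid_norm]
  calc Real.sqrt ((A.mulVec x 0)^2 + (A.mulVec x 1)^2 + (A.mulVec x 2)^2)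
      ≤ Real.sqrt (C^2 * ((x 0)^2 + (x 1)^2 + (x 2)^2)) := Real.sqrt_le_sqrt (h x)
    _ = C * Real.sqrt ((x 0)^2 + (x 1)^2 + (x 2)^2) := by
        rw [Real.sqrt_mul (sq_nonneg C), Real.sqrt_sq hC]

lemma le_opNorm2 {A : Matrix (Fin 3) (Fin 3) ℝ} {C : ℝ} (hC : 0 ≤ C) (x : Fin 3 → ℝ)
    (hx : 0 < (x 0)^2 + (x 1)^2 + (x 2)^2)
    (h : C^2 * ((x 0)^2 + (x 1)^2 + (x 2)^2)
        ≤ (A.mulVec x 0)^2 + (A.mulVec x 1)^2 + (A.mulVec x 2)^2) :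
    C ≤ opNorm2 A := by
  have hle := (Matrix.toEuclideanCLM (𝕜 := ℝ) A).le_opNorm ((WithLp.equiv 2 (Fin 3 → ℝ)).symm x)
  rw [show Matrix.toEuclideanCLM (𝕜 := ℝ) A ((WithLp.equiv 2 (Fin 3 → ℝ)).symm x) = (WithLp.equiv 2 (Fin 3 → ℝ)).symm (Matrix.toLin' A x) from rfl, Matrix.toLin'_apply, euclid_norm, euclid_norm] at hle
  have h1 : C * Real.sqrt ((x 0)^2 + (x 1)^2 + (x 2)^2)
      ≤ Real.sqrt ((A.mulVec x 0)^2 + (A.mulVec x 1)^2 + (A.mulVec x 2)^2) := by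
    rw [← Real.sqrt_sq hC, ← Real.sqrt_mul (sq_nonneg C)]
    exact Real.sqrt_le_sqrt h
  have h2 : 0 < Real.sqrt ((x 0)^2 + (x 1)^2 + (x 2)^2) := Real.sqrt_pos.2 hx
  exact le_of_mul_le_mul_right (h1.trans hle) h2

lemma pointwise_upper (k₁ q t x₀ x₁ x₂ : ℝ) (ht : 0 < t) (hq : q^2 ≤ t^2) :
    (-2*k₁*x₀ + x₁ - q*x₂)^2 + x₀^2 + (t*x₀)^2
      ≤ (|k₁| + Real.sqrt (1+k₁^2+t^2))^2 * (x₀^2 + x₁^2 + x₂^2) := by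
  set k := |k₁| with hkdef
  set R := Real.sqrt (1+k₁^2+t^2) with hRdef
  set m := 1 + t^2 with hmdef
  have hk2 : k^2 = k₁^2 := sq_abs k₁
  have hR2 : R^2 = k₁^2 + m := by
    rw [hRdef, Real.sq_sqrt (by positivity), hmdef]; ring
  have hk0 : 0 ≤ k := abs_nonneg k₁
  have hR0 : 0 < R := Real.sqrt_pos.2 (by positivity)
  have hm0 : 0 < m := by rw [hmdef]; positivity
  set p := x₁ - q*x₂ with hpdef
  have hp : p^2 ≤ m*(x₁^2+x₂^2) := by
    have h1 : 0 ≤ (t^2-q^2)*(x₁^2+x₂^2) :=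
      mul_nonneg (by linarith) (by positivity)
    rw [hpdef, hmdef]
    nlinarith [sq_nonneg (q*x₁+x₂)]
  have hE : 0 ≤ 2*k*(R-k)*m*x₀^2 + 4*k₁*m*x₀*p + 2*k*(k+R)*p^2 := by
    rcases eq_or_ne k₁ 0 with h0 | h0
    · have hz : k = 0 := by rw [hkdef, h0, abs_zero]
      rw [hz, h0]; ring_nf; exact le_rfl
    · have hkpos : 0 < k := abs_pos.2 h0
      have h4 : 0 < 4*k*(k+R) := by positivity
      have hid : 4*k*(k+R) * (2*k*(R-k)*m*x₀^2 + 4*k₁*m*x₀*p + 2*k*(k+R)*p^2)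
          = 2*(2*k*(k+R)*p + 2*k₁*m*x₀)^2 := by
        linear_combination (8*m*x₀^2*(m-k^2))*hk2 + (8*m*x₀^2*k^2)*hR2
      nlinarith [sq_nonneg (2*k*(k+R)*p + 2*k₁*m*x₀), hid, h4]
  have hdiff : m*((k+R)^2*x₀^2) + (k+R)^2*p^2 - m*((-2*k₁*x₀+p)^2 + m*x₀^2)
      = 2*k*(R-k)*m*x₀^2 + 4*k₁*m*x₀*p + 2*k*(k+R)*p^2 := by
    linear_combination (3*m*x₀^2 - p^2)*hk2 + (m*x₀^2 + p^2)*hR2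
  have h2' : m*((-2*k₁*x₀+p)^2 + m*x₀^2) ≤ m*((k+R)^2*x₀^2) + (k+R)^2*p^2 := by
    linarith
  have h3 : (k+R)^2*p^2 ≤ (k+R)^2*(m*(x₁^2+x₂^2)) :=
    mul_le_mul_of_nonneg_left hp (sq_nonneg _)
  have hfin : m*((-2*k₁*x₀ + x₁ - q*x₂)^2 + x₀^2 + (t*x₀)^2)
      ≤ m*((k+R)^2 * (x₀^2 + x₁^2 + x₂^2)) := by
    have h4 : m*((-2*k₁*x₀ + x₁ - q*x₂)^2 + x₀^2 + (t*x₀)^2)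
        = m*((-2*k₁*x₀+p)^2 + m*x₀^2) := by rw [hpdef, hmdef]; ring
    rw [h4]
    have h5 : m*((k+R)^2*x₀^2) + (k+R)^2*p^2 ≤ m*((k+R)^2*(x₀^2+x₁^2+x₂^2)) := by
      nlinarith [h3]
    linarith
  have := le_of_mul_le_mul_left hfin hm0
  linarith

lemma upper_aux (k₁ k₂ t : ℝ) (ht : 0 < t) (hq : k₂^2 ≤ t^4) :
    opNorm2 !![-2*k₁, 1, -(k₂*t⁻¹); 1, 0, 0; t, 0, 0]
      ≤ |k₁| + Real.sqrt (1+k₁^2+t^2) := by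
  apply opNorm2_le (by positivity)
  intro x
  have hq' : (k₂*t⁻¹)^2 ≤ t^2 := by
    calc (k₂*t⁻¹)^2 = k₂^2 * (t⁻¹)^2 := by ring
      _ ≤ t^4 * (t⁻¹)^2 := mul_le_mul_of_nonneg_right hq (by positivity)
      _ = t^2 := by field_simp
  have key := pointwise_upper k₁ (k₂*t⁻¹) t (x 0) (x 1) (x 2) ht hq'
  simp [Matrix.mulVec, dotProduct, Fin.sum_univ_three]
  linarith [key]

set_option maxHeartbeats 2000000 in
lemma lower_aux (k₁ k₂ a b : ℝ) (ha : 0 < a) (hb : 0 < b) :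
    |k₁| + Real.sqrt (1+k₁^2+|k₂|)
      ≤ opNorm2 !![-2*k₁, a, -(k₂*b); a⁻¹, 0, 0; b⁻¹, 0, 0] := by
  obtain ⟨k, hkdef⟩ : ∃ k : ℝ, k = |k₁| := ⟨_, rfl⟩
  obtain ⟨R, hRdef⟩ : ∃ R : ℝ, R = Real.sqrt (1+k₁^2+|k₂|) := ⟨_, rfl⟩
  obtain ⟨m, hmdef⟩ : ∃ m : ℝ, m = 1 + |k₂| := ⟨_, rfl⟩
  rw [← hkdef, ← hRdef]
  have hk2 : k^2 = k₁^2 := by rw [hkdef]; exact sq_abs k₁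
  have hR2 : R^2 = k₁^2 + m := by
    rw [hRdef, Real.sq_sqrt (by positivity), hmdef]; ring
  have hk0 : 0 ≤ k := by rw [hkdef]; exact abs_nonneg k₁
  have hR0 : 0 < R := by rw [hRdef]; exact Real.sqrt_pos.2 (by positivity)
  have hm0 : 0 < m := by rw [hmdef]; positivity
  have hT0 : 0 < k + R := by linarith
  obtain ⟨c, hcdef⟩ : ∃ c : ℝ, c = (a⁻¹)^2 + (b⁻¹)^2 := ⟨_, rfl⟩
  obtain ⟨s, hsdef⟩ : ∃ s : ℝ, s = a^2 + (k₂*b)^2 := ⟨_, rfl⟩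
  have hc0 : 0 < c := by rw [hcdef]; positivity
  have hs0 : 0 < s := by rw [hsdef]; positivity
  by_cases hA : (k+R)^2 ≤ 4*k₁^2 + c
  · apply le_opNorm2 hT0.le ![1,0,0] (by norm_num [Matrix.cons_val_two, Matrix.vecHead, Matrix.vecTail])
    rw [hcdef] at hA
    simp only [inv_pow] at hA
    simp [Matrix.mulVec, dotProduct, Fin.sum_univ_three]
    linarith [hA]
  by_cases hB : (k+R)^2 ≤ s
  · refine le_opNorm2 hT0.le ![0, a, -(k₂*b)] ?_ ?_
    · simp only [Matrix.cons_val_zero, Matrix.cons_val_one, Matrix.head_cons,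
        Matrix.cons_val_two, Matrix.tail_cons]
      positivity
    · have h2 : (k+R)^2*s ≤ s*s := mul_le_mul_of_nonneg_right hB hs0.le
      rw [hsdef] at h2
      simp [Matrix.mulVec, dotProduct, Fin.sum_univ_three]
      linarith [h2]
  · push_neg at hA hB
    have hkey : (b^2 + a^2)*(a^2 + (k₂*b)^2) - m^2*(a^2*b^2) = (a^2 - (m-1)*b^2)^2 := by
      have habs : (m-1)^2 = k₂^2 := by rw [hmdef]; simp [sq_abs]
      linear_combination (-(b^4+a^2*b^2))*habs
    have hcs : m^2 ≤ c*s := by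
      have hab : (0:ℝ) < a^2*b^2 := by positivity
      have hexp : c*(a^2*b^2) = b^2+a^2 := by rw [hcdef]; field_simp
      have h2 : m^2*(a^2*b^2) ≤ (c*s)*(a^2*b^2) := by
        have h3 : (c*s)*(a^2*b^2) = (b^2+a^2)*s := by rw [← hexp]; ring
        rw [h3, hsdef]
        nlinarith [hkey, sq_nonneg (a^2-(m-1)*b^2)]
      exact le_of_mul_le_mul_right h2 hab
    obtain ⟨u, hu0, hu2⟩ : ∃ u : ℝ, 0 ≤ u ∧ u^2 = c*s :=
      ⟨Real.sqrt (c*s), Real.sqrt_nonneg _,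
        Real.sq_sqrt (mul_nonneg hc0.le hs0.le)⟩
    have h2u : 2*u ≤ c + s := by
      have hsq : (2*u)^2 ≤ (c+s)^2 := by nlinarith [sq_nonneg (c-s), hu2]
      exact le_of_pow_le_pow_left₀ two_ne_zero (by linarith) hsq
    have hum : m ≤ u := by
      have hsq : m^2 ≤ u^2 := by rw [hu2]; exact hcs
      exact le_of_pow_le_pow_left₀ two_ne_zero hu0 hsq
    have hm2T : m = (k+R)^2 - 2*k*(k+R) := by linear_combination hk2 - hR2
    have hu_lt : u < (k+R)^2 - 2*k₁^2 := by linarith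
    have hu_le : u ≤ (k+R)^2 + 2*k*(k+R) := by
      linarith [hu_lt, mul_nonneg hk0 hT0.le, sq_nonneg k₁]
    have hGid : (k+R)^2*(4*k₁^2+c+s) - c*s - ((k+R)^2)^2
        = (u-m)*((k+R)^2+2*k*(k+R)-u) + (k+R)^2*(c+s-2*u) := by
      linear_combination ((k+R)^2+2*k*(k+R)-u)*hm2T - 4*(k+R)^2*hk2 + hu2
    have hG : 0 ≤ (k+R)^2*(4*k₁^2+c+s) - c*s - ((k+R)^2)^2 := by
      rw [hGid]
      have p1 : 0 ≤ (u-m)*((k+R)^2+2*k*(k+R)-u) :=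
        mul_nonneg (by linarith) (by linarith)
      have p2 : 0 ≤ (k+R)^2*(c+s-2*u) := mul_nonneg (sq_nonneg _) (by linarith)
      linarith
    obtain ⟨β, hβdef⟩ : ∃ β : ℝ, β = (k+R)^2 - 4*k₁^2 - c := ⟨_, rfl⟩
    have hβ0 : 0 < β := by rw [hβdef]; linarith
    refine le_opNorm2 hT0.le ![-2*k₁*s, β*a, -(β*(k₂*b))] ?_ ?_
    · have h1 : 0 < (β*a)^2 := by positivity
      simp only [Matrix.cons_val_zero, Matrix.cons_val_one, Matrix.head_cons,
        Matrix.cons_val_two, Matrix.tail_cons]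
      nlinarith [h1, sq_nonneg (-2*k₁*s), sq_nonneg (β*(k₂*b))]
    · have hprod : 0 ≤ s*β*((k+R)^2*(4*k₁^2+c+s) - c*s - ((k+R)^2)^2) :=
        mul_nonneg (mul_nonneg hs0.le hβ0.le) hG
      rw [hβdef] at hprod
      rw [hsdef, hcdef] at hprod
      rw [hβdef, hsdef, hcdef]
      simp [Matrix.mulVec, dotProduct, Fin.sum_univ_three]
      simp only [← inv_pow]
      linarith [hprod]

lemma diag_inv (d : Fin 3 → ℝ) (hd : ∀ i, d i ≠ 0) :
    (Matrix.diagonal d)⁻¹ = Matrix.diagonal (fun i => (d i)⁻¹) := by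
  apply Matrix.inv_eq_right_inv
  rw [Matrix.diagonal_mul_diagonal]
  have h1 : (fun i => d i * (d i)⁻¹) = fun _ : Fin 3 => (1:ℝ) :=
    funext fun i => mul_inv_cancel₀ (hd i)
  rw [h1, Matrix.diagonal_one]

lemma conj_diag (k₁ k₂ : ℝ) (d : Fin 3 → ℝ) (hd : ∀ i, d i ≠ 0) :
    Matrix.diagonal d * Kmat k₁ k₂ * (Matrix.diagonal d)⁻¹
      = !![-2*k₁, d 0 * (d 1)⁻¹, -(k₂*(d 0 * (d 2)⁻¹));
           (d 0 * (d 1)⁻¹)⁻¹, 0, 0; (d 0 * (d 2)⁻¹)⁻¹, 0, 0] := by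
  rw [diag_inv d hd]
  have key : ∀ i j, (Matrix.diagonal d * Kmat k₁ k₂ * Matrix.diagonal fun i => (d i)⁻¹) i j
      = d i * Kmat k₁ k₂ i j * (d j)⁻¹ := by
    intro i j
    rw [Matrix.mul_diagonal, Matrix.diagonal_mul]
  ext i j
  rw [key]
  fin_cases i <;> fin_cases j <;>
    (try simp [Kmat, Matrix.vecHead, Matrix.vecTail]) <;>
    (try field_simp [hd 0, hd 1, hd 2]) <;>
    (try ring)

end Stmt5Aux


open Stmt5Aux in
set_option maxHeartbeats 1000000 in
theorem stmt_5 (k₁ k₂ : ℝ) :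
    sInf {x : ℝ | ∃ D : Matrix (Fin 3) (Fin 3) ℝ, D.IsDiag ∧ (∀ i, 0 < D i i) ∧
        x = opNorm2 (D * Kmat k₁ k₂ * D⁻¹)} =
      |k₁| + Real.sqrt (1 + k₁ ^ 2 + |k₂|) := by
  set S := {x : ℝ | ∃ D : Matrix (Fin 3) (Fin 3) ℝ, D.IsDiag ∧ (∀ i, 0 < D i i) ∧
      x = opNorm2 (D * Kmat k₁ k₂ * D⁻¹)} with hSdef
  set T := |k₁| + Real.sqrt (1 + k₁ ^ 2 + |k₂|) with hTdef
  -- lower bound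
  have hlow : ∀ x ∈ S, T ≤ x := by
    rintro x ⟨D, hdiag, hpos, rfl⟩
    have hDd : D = Matrix.diagonal (fun i => D i i) := (hdiag.diagonal_diag).symm
    have hd : ∀ i, D i i ≠ 0 := fun i => (hpos i).ne'
    rw [hDd, conj_diag k₁ k₂ _ hd]
    exact lower_aux k₁ k₂ _ _
      (mul_pos (hpos 0) (inv_pos.2 (hpos 1)))
      (mul_pos (hpos 0) (inv_pos.2 (hpos 2)))
  -- upper bound witnesses
  have hup : ∀ ε : ℝ, 0 < ε → ∃ x ∈ S, x ≤ T + ε := by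
    intro ε hε
    obtain ⟨t, ht0, htsq⟩ : ∃ t : ℝ, 0 < t ∧ t^2 = |k₂| + ε^2 :=
      ⟨Real.sqrt (|k₂| + ε^2), Real.sqrt_pos.2 (by positivity),
        Real.sq_sqrt (by positivity)⟩
    set d : Fin 3 → ℝ := ![1, 1, t] with hddef
    have hd : ∀ i, d i ≠ 0 := by
      intro i; fin_cases i <;> simp [hddef] <;> exact ht0.ne'
    refine ⟨opNorm2 (Matrix.diagonal d * Kmat k₁ k₂ * (Matrix.diagonal d)⁻¹), ⟨Matrix.diagonal d,
      Matrix.isDiag_diagonal d, ?_, rfl⟩, ?_⟩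
    · intro i
      rw [Matrix.diagonal_apply_eq]
      fin_cases i <;> simp [hddef] <;> exact ht0
    · rw [conj_diag k₁ k₂ d hd]
      have hsimp : !![-2*k₁, d 0 * (d 1)⁻¹, -(k₂*(d 0 * (d 2)⁻¹));
           (d 0 * (d 1)⁻¹)⁻¹, 0, 0; (d 0 * (d 2)⁻¹)⁻¹, 0, 0]
          = !![-2*k₁, 1, -(k₂*t⁻¹); 1, 0, 0; t, 0, 0] := by
        rw [hddef]
        norm_num [Matrix.cons_val_two, Matrix.vecHead, Matrix.vecTail]
      rw [hsimp]
      have hq : k₂^2 ≤ t^4 := by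
        have : t^4 = (|k₂| + ε^2)^2 := by rw [← htsq]; ring
        rw [this]
        nlinarith [sq_abs k₂, abs_nonneg k₂, sq_nonneg ε, sq_nonneg (ε^2)]
      have h1 := upper_aux k₁ k₂ t ht0 hq
      have h2 : Real.sqrt (1+k₁^2+t^2) ≤ Real.sqrt (1+k₁^2+|k₂|) + ε := by
        have hX : (0:ℝ) ≤ 1+k₁^2+|k₂| := by positivity
        have h3 : 1+k₁^2+t^2 ≤ (Real.sqrt (1+k₁^2+|k₂|)+ε)^2 := by
          nlinarith [Real.sq_sqrt hX, Real.sqrt_nonneg (1+k₁^2+|k₂|), htsq, hε.le]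
        calc Real.sqrt (1+k₁^2+t^2)
            ≤ Real.sqrt ((Real.sqrt (1+k₁^2+|k₂|)+ε)^2) := Real.sqrt_le_sqrt h3
          _ = Real.sqrt (1+k₁^2+|k₂|)+ε :=
              Real.sqrt_sq (by positivity)
      rw [hTdef]
      linarith
  -- conclude
  have hne : S.Nonempty := by
    obtain ⟨x, hx, -⟩ := hup 1 one_pos
    exact ⟨x, hx⟩
  have hbdd : BddBelow S := ⟨T, fun x hx => hlow x hx⟩
  refine le_antisymm ?_ (le_csInf hne hlow)
  apply le_of_forall_pos_le_add
  intro ε hε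
  obtain ⟨x, hx, hxe⟩ := hup ε hε
  exact (csInf_le hbdd hx).trans hxe
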